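/- Cascaded CP marginal coverage: Let (X,Y) be a random pair, and suppose the corrected p-value random variable P̃ = M(P₁,...,Pₘ) evaluated at the true label satisfies ℙ(P̃ ≤ ε) ≤ ε, where M is element-wise monotonic. Then for every j ∈ {1,...,m}, the step-j conformal set C^j = { y : M(P₁(y),...,Pⱼ(y),1,...,1) > ε } satisfies ℙ(Y ∈ C^j) ≥ 1 − ε. -/

import Mathlib

open MeasureTheory

/-- Cascaded CP marginal coverage: if the fully corrected p-value at the true
label is superuniform at level `ε`, then every step-`j` conservative conformal
set covers the true label with probability at least `1 - ε`. -/
theorem cascaded_cp_marginal_coverage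
    {Ω : Type*} [MeasurableSpace Ω] (μ : Measure Ω) [IsProbabilityMeasure μ]
    {𝒴 : Type*} (Y : Ω → 𝒴) (m : ℕ) (M : (Fin m → ℝ) → ℝ)
    (hM0 : ∀ p : Fin m → ℝ, (∀ k, p k ∈ Set.Icc (0 : ℝ) 1) → 0 ≤ M p)
    (hmono : ∀ p q : Fin m → ℝ, (∀ k, p k ∈ Set.Icc (0 : ℝ) 1) →
      (∀ k, q k ∈ Set.Icc (0 : ℝ) 1) → (∀ k, p k ≤ q k) → M p ≤ M q)
    (P : Fin m → 𝒴 → Ω → ℝ) (hP : ∀ k y ω, P k y ω ∈ Set.Icc (0 : ℝ) 1)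
    (ε : ℝ) (hε : ε ∈ Set.Ioo (0 : ℝ) 1)
    (hvalid : μ {ω | M (fun k => P k (Y ω) ω) ≤ ε} ≤ ENNReal.ofReal ε) :
    ∀ j : ℕ, j ≤ m →
      1 - ENNReal.ofReal ε
        ≤ μ {ω | Y ω ∈ {y | ε < M (fun k => if (k : ℕ) < j then P k y ω else 1)}} := by

  intro j hj
  set S : Set Ω := {ω | Y ω ∈ {y | ε < M (fun k => if (k : ℕ) < j then P k y ω else 1)}}
  have hsub : Sᶜ ⊆ {ω | M (fun k => P k (Y ω) ω) ≤ ε} := by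
    intro ω hω
    simp only [S, Set.mem_compl_iff, Set.mem_setOf_eq, not_lt] at hω ⊢
    refine le_trans ?_ hω
    apply hmono
    · intro k; exact hP k (Y ω) ω
    · intro k
      by_cases h : (k : ℕ) < j
      · simpa [h] using hP k (Y ω) ω
      · simp [h]
    · intro k
      by_cases h : (k : ℕ) < j
      · simp [h]
      · simpa [h] using (hP k (Y ω) ω).2
  have hc : μ Sᶜ ≤ ENNReal.ofReal ε := le_trans (measure_mono hsub) hvalid
  have h1 : (1 : ENNReal) = μ Set.univ := (measure_univ).symm
  have : (1 : ENNReal) ≤ μ S + ENNReal.ofReal ε := by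
    calc (1 : ENNReal) = μ Set.univ := h1
    _ = μ (S ∪ Sᶜ) := by rw [Set.union_compl_self]
    _ ≤ μ S + μ Sᶜ := measure_union_le _ _
    _ ≤ μ S + ENNReal.ofReal ε := add_le_add (le_refl _) hc
  exact tsub_le_iff_right.2 this
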